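/- Let (U, I) be an independence system with element values v_i > 0, costs c_i ≥ 0, and budget B > 0, let the feasible elements (c_i ≤ B) be enumerated 1,...,m so that c_1/v_1 ≥ ... ≥ c_m/v_m, and let A_j = {j,...,m}. Let ρ ≥ 1 and suppose for some j ∈ {1,...,m}: M ∈ I with M ⊆ A_j and v(M) ≥ (1/ρ)·max{v(T) : T ∈ I, T ⊆ A_j}; v(M)·(c_j/v_j) ≤ B; and, if j > 1, there is M' ∈ I with M' ⊆ A_{j-1}, v(M') ≥ (1/ρ)·max{v(T) : T ∈ I, T ⊆ A_{j-1}}, and v(M')·(c_{j-1}/v_{j-1}) > B. Then v(M) ≥ (1/(2ρ))·(OPT - v_{i*}), where OPT = max{v(T) : T ∈ I, T ⊆ A_1, Σ_{i∈T} c_i ≤ B} and v_{i*} = max{v_i : c_i ≤ B}. -/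
import Mathlib


open Finset

/-- **Greedy-ISK's value for Independence System Knapsack, with a
`ρ`-approximate oracle.** With the feasible elements `1,…,m` sorted by non-increasing
cost-to-value ratio and `A_j = {j,…,m}`, suppose `M ∈ I` with `M ⊆ A_j` is a
`ρ`-approximately maximum-value independent set in `A_j` with `v(M)·(c_j/v_j) ≤ B`, and
(when `j > 1`) some `ρ`-approximately maximum-value independent set `M' ∈ I` in `A_{j-1}`
satisfies `v(M')·(c_{j-1}/v_{j-1}) > B`. Then `v(M) ≥ (1/(2ρ))(OPT - v_{i*})`. -/
theorem greedy_isk_value_independence_system (m : ℕ) (I : Set (Finset (Fin m)))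
    (hI₁ : ∅ ∈ I) (hI₂ : ∀ A B : Finset (Fin m), B ∈ I → A ⊆ B → A ∈ I)
    (v c : Fin m → ℝ) (hv : ∀ i, 0 < v i) (hc : ∀ i, 0 ≤ c i)
    (B : ℝ) (hB : 0 < B) (hfeas : ∀ i, c i ≤ B)
    (hsingle : ∀ i : Fin m, ({i} : Finset (Fin m)) ∈ I)
    (hsort : ∀ i k : Fin m, i ≤ k → c k / v k ≤ c i / v i)
    (ρ : ℝ) (hρ : 1 ≤ ρ)
    (j : Fin m) (M : Finset (Fin m)) (hMI : M ∈ I) (hMA : ∀ i ∈ M, j ≤ i)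
    (hMapx : ∀ T ∈ I, (∀ i ∈ T, j ≤ i) → ∑ i ∈ T, v i ≤ ρ * ∑ i ∈ M, v i)
    (hstop : (∑ i ∈ M, v i) * (c j / v j) ≤ B)
    (hprev : ∀ k : Fin m, (k : ℕ) + 1 = (j : ℕ) →
      ∃ M' ∈ I, (∀ i ∈ M', k ≤ i) ∧
        (∀ T ∈ I, (∀ i ∈ T, k ≤ i) → ∑ i ∈ T, v i ≤ ρ * ∑ i ∈ M', v i) ∧
        B < (∑ i ∈ M', v i) * (c k / v k))
    (OPT : ℝ)
    (hOPT : IsGreatest {t : ℝ | ∃ T ∈ I, (∑ i ∈ T, c i) ≤ B ∧ t = ∑ i ∈ T, v i} OPT)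
    (vstar : ℝ) (hstar : IsGreatest {t : ℝ | ∃ i : Fin m, t = v i} vstar) :
    ∑ i ∈ M, v i ≥ (1 / (2 * ρ)) * (OPT - vstar) := by
  obtain ⟨T, hTI, hTc, hTv⟩ := hOPT.1
  have hρ0 : (0:ℝ) < ρ := lt_of_lt_of_le one_pos hρ
  have hvM : (0:ℝ) ≤ ∑ i ∈ M, v i := Finset.sum_nonneg (fun i _ => (hv i).le)
  have hvstar : (0:ℝ) ≤ vstar := by
    obtain ⟨i, hi⟩ := hstar.1
    exact hi ▸ (hv i).le
  have key : OPT - vstar ≤ 2 * ρ * ∑ i ∈ M, v i := by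
    by_cases hj : (j : ℕ) = 0
    · have hT : ∀ i ∈ T, j ≤ i := fun i _ => Fin.le_def.2 (by omega)
      have := hMapx T hTI hT
      nlinarith
    · obtain ⟨k, hk⟩ : ∃ k : Fin m, (k : ℕ) + 1 = (j : ℕ) :=
        ⟨⟨(j : ℕ) - 1, lt_trans (Nat.sub_lt (Nat.pos_of_ne_zero hj) one_pos) j.isLt⟩,
          by simp; omega⟩
      obtain ⟨M', hM'I, hM'A, hM'apx, hM'B⟩ := hprev k hk
      set T₁ := T.filter (fun i => ¬ j ≤ i) with hT1
      set T₂ := T.filter (fun i => j ≤ i) with hT2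
      have hsplitv : ∑ i ∈ T, v i = ∑ i ∈ T₂, v i + ∑ i ∈ T₁, v i :=
        (Finset.sum_filter_add_sum_filter_not T _ v).symm
      have h2 : ∑ i ∈ T₂, v i ≤ ρ * ∑ i ∈ M, v i :=
        hMapx T₂ (hI₂ _ _ hTI (filter_subset _ _)) (fun i hi => (mem_filter.1 hi).2)
      have hS' : (0:ℝ) ≤ ∑ i ∈ M', v i := Finset.sum_nonneg (fun i _ => (hv i).le)
      have hvk : 0 < v k := hv k
      have hck : 0 < c k := by
        by_contra h
        push_neg at h
        have hck0 : c k = 0 := le_antisymm h (hc k)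
        rw [hck0] at hM'B
        simp at hM'B
        linarith
      have h1 : ∑ i ∈ T₁, v i < ∑ i ∈ M', v i := by
        have hbound : ∀ i ∈ T₁, v i ≤ c i * (v k / c k) := by
          intro i hi
          have hik : i ≤ k := by
            have hlt : ¬ j ≤ i := (mem_filter.1 hi).2
            have : (i : ℕ) < (j : ℕ) := Fin.lt_def.1 (not_le.1 hlt)
            exact Fin.le_def.2 (by omega)
          have hratio := hsort i k hik
          rw [div_le_div_iff₀ hvk (hv i)] at hratio
          have h' : v i * c k ≤ c i * v k := by nlinarith
          calc v i = v i * c k / c k := by field_simp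
            _ ≤ c i * v k / c k := (div_le_div_iff_of_pos_right hck).2 h'
            _ = c i * (v k / c k) := by ring
        calc ∑ i ∈ T₁, v i ≤ ∑ i ∈ T₁, c i * (v k / c k) := Finset.sum_le_sum hbound
          _ = (∑ i ∈ T₁, c i) * (v k / c k) := (Finset.sum_mul _ _ _).symm
          _ ≤ B * (v k / c k) := by
              refine mul_le_mul_of_nonneg_right ?_ (by positivity)
              calc ∑ i ∈ T₁, c i ≤ ∑ i ∈ T, c i :=
                    Finset.sum_le_sum_of_subset_of_nonneg (filter_subset _ _)
                      (fun i _ _ => hc i)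
                _ ≤ B := hTc
          _ < (∑ i ∈ M', v i) := by
              calc B * (v k / c k)
                  < (∑ i ∈ M', v i) * (c k / v k) * (v k / c k) :=
                    mul_lt_mul_of_pos_right hM'B (by positivity)
                _ = ∑ i ∈ M', v i := by field_simp
      have h3 : ∑ i ∈ M', v i ≤ ρ * ∑ i ∈ M, v i + vstar := by
        have herase : ∑ i ∈ M'.erase k, v i ≤ ρ * ∑ i ∈ M, v i := by
          refine hMapx _ (hI₂ _ _ hM'I (erase_subset _ _)) ?_
          intro i hi
          obtain ⟨hne, hiM'⟩ := Finset.mem_erase.1 hi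
          have hki : (k : ℕ) ≤ (i : ℕ) := Fin.le_def.1 (hM'A i hiM')
          have hkne : (k : ℕ) ≠ (i : ℕ) := fun h => hne (Fin.ext h.symm)
          exact Fin.le_def.2 (by omega)
        have hvkstar : v k ≤ vstar := hstar.2 ⟨k, rfl⟩
        by_cases hkM : k ∈ M'
        · rw [← Finset.sum_erase_add M' v hkM]
          linarith
        · rw [Finset.erase_eq_of_notMem hkM] at herase
          linarith
      nlinarith
  have h2ρ : (0:ℝ) < 2 * ρ := by linarith
  rw [ge_iff_le, div_mul_eq_mul_div, one_mul, div_le_iff₀ h2ρ]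
  nlinarith
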